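/- If (t + 1)¹⁹ divides the discriminant Δ of W in K[t], then Δ = 0. -/

import Mathlib

open Polynomial

set_option maxHeartbeats 2000000 in
/-- Case (iii): `a₁ = t`. If `(t+1)¹⁹ ∣ Δ`, then `Δ = 0`. -/
theorem discriminant_t_add_one_nineteen_dvd_case_iii (K : Type*) [Field K] [CharP K 2]
    (a b c d : K) (a₂ a₆ : K[X]) (h₂ : a₂.degree ≤ 4) (h₆ : a₆.degree ≤ 12)
    (W : WeierstrassCurve K[X])
    (ha₁ : W.a₁ = X) (ha₂ : W.a₂ = a₂) (ha₃ : W.a₃ = C a * X ^ 6 + C b)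
    (ha₄ : W.a₄ = C c * X ^ 8 + C d) (ha₆ : W.a₆ = a₆)
    (h : (X + 1) ^ 19 ∣ W.Δ) :
    W.Δ = 0 := by
  by_contra hΔ0
  have h2 : (2 : K[X]) = 0 := by simpa using CharP.cast_eq_zero K[X] 2
  have ha2c : ∀ m, 4 < m → a₂.coeff m = 0 := fun m hm =>
    coeff_eq_zero_of_natDegree_lt (lt_of_le_of_lt (natDegree_le_iff_degree_le.mpr h₂) hm)
  have ha6c : ∀ m, 12 < m → a₆.coeff m = 0 := fun m hm =>
    coeff_eq_zero_of_natDegree_lt (lt_of_le_of_lt (natDegree_le_iff_degree_le.mpr h₆) hm)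
  have hE : W.Δ = (C a)^4 * X^24 + (C a)^3 * X^21 + (C a)^2 * (a₂ * X^16) + a₆ * X^6
      + (C a * C c) * X^19 + (C c)^2 * X^20 + ((C a)^2 * C b) * X^15 + (C a * (C b)^2) * X^9
      + (C b * C c) * X^13 + (C a * C d) * X^11 + (C b)^2 * (a₂ * X^4) + (C b * C d) * X^5
      + (C d)^2 * X^4 + (C b)^3 * X^3 + (C b)^4 := by
    simp only [WeierstrassCurve.Δ, WeierstrassCurve.b₂, WeierstrassCurve.b₄,
      WeierstrassCurve.b₆, WeierstrassCurve.b₈, ha₁, ha₂, ha₃, ha₄, ha₆]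
    linear_combination (- 14*(X)^24*(C a)^4 - 32*(X)^24*(C c)^3 - 48*(X)^23*(C a)*(C c)^2 - 15*(X)^22*(C a)^2*(C c) + 36*(X)^20*(C a)^2*(C c)*(a₂) + 18*(X)^19*(C a)^3*(a₂) - 54*(X)^18*(C a)^3*(C b) + 4*(X)^18*(C c)^2*(a₂) + 4*(X)^17*(C a)*(C c)*(a₂) - 48*(X)^17*(C b)*(C c)^2 - (X)^16*(C a)^2*(a₂) - 30*(X)^16*(C a)*(C b)*(C c) - 96*(X)^16*(C c)^2*(C d) + 8*(X)^16*(C c)^2*(a₂)^2 + (X)^15*(C a)^2*(C b) - 96*(X)^15*(C a)*(C c)*(C d) + 8*(X)^15*(C a)*(C c)*(a₂)^2 - 15*(X)^14*(C a)^2*(C d) - 4*(X)^14*(C a)^2*(a₂)^2 + 72*(X)^14*(C a)*(C b)*(C c)*(a₂) + 54*(X)^13*(C a)^2*(C b)*(a₂) - 81*(X)^12*(C a)^2*(C b)^2 + 36*(X)^12*(C a)^2*(C d)*(a₂) - 8*(X)^12*(C a)^2*(a₂)^3 - 108*(X)^12*(C a)^2*(a₆) + (X)^12*(C c)*(C d)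 + 4*(X)^11*(C b)*(C c)*(a₂) - (X)^10*(C a)*(C b)*(a₂) - 15*(X)^10*(C b)^2*(C c) + 8*(X)^10*(C c)*(C d)*(a₂) + 36*(X)^10*(C c)*(a₆) + (X)^9*(C a)*(C b)^2 + 4*(X)^9*(C a)*(C d)*(a₂) + 18*(X)^9*(C a)*(a₆) - 96*(X)^9*(C b)*(C c)*(C d) + 8*(X)^9*(C b)*(C c)*(a₂)^2 - 30*(X)^8*(C a)*(C b)*(C d) - 8*(X)^8*(C a)*(C b)*(a₂)^2 + 36*(X)^8*(C b)^2*(C c)*(a₂) - 96*(X)^8*(C c)*(C d)^2 + 16*(X)^8*(C c)*(C d)*(a₂)^2 + 144*(X)^8*(C c)*(a₂)*(a₆) + 54*(X)^7*(C a)*(C b)^2*(a₂) - 48*(X)^7*(C a)*(C d)^2 + 8*(X)^7*(C a)*(C d)*(a₂)^2 + 72*(X)^7*(C a)*(a₂)*(a₆) - 54*(X)^6*(C a)*(C b)^3 + 72*(X)^6*(C a)*(C b)*(C d)*(a₂) - 16*(X)^6*(C a)*(C b)*(a₂)^3 - 216*(X)^6*(C a)*(C b)*(a₆) - (X)^6*(a₆)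 - (X)^4*(C b)^2*(a₂) - 6*(X)^4*(a₂)*(a₆) + 4*(X)^3*(C b)*(C d)*(a₂) + 18*(X)^3*(C b)*(a₆) - 15*(X)^2*(C b)^2*(C d) - 4*(X)^2*(C b)^2*(a₂)^2 + 4*(X)^2*(C d)^2*(a₂) + 36*(X)^2*(C d)*(a₆) - 24*(X)^2*(a₂)^2*(a₆) + 18*(X)*(C b)^3*(a₂) - 48*(X)*(C b)*(C d)^2 + 8*(X)*(C b)*(C d)*(a₂)^2 + 72*(X)*(C b)*(a₂)*(a₆) - 14*(C b)^4 + 36*(C b)^2*(C d)*(a₂) - 8*(C b)^2*(a₂)^3 - 108*(C b)^2*(a₆) - 32*(C d)^3 + 8*(C d)^2*(a₂)^2 + 144*(C d)*(a₂)*(a₆) - 32*(a₂)^3*(a₆) - 216*(a₆)^2) * h2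
  have hdegΔ : W.Δ.degree ≤ 24 := by
    rw [hE]
    compute_degree
    refine max_le (max_le (max_le le_rfl ?_) ?_) ?_
    · exact (add_le_add_left h₂ 16).trans (by decide)
    · exact (add_le_add_left h₆ 6).trans (by decide)
    · exact (add_le_add_left h₂ 4).trans (by decide)
  obtain ⟨g, hg⟩ := h
  have hgne : g ≠ 0 := by rintro rfl; exact hΔ0 (by simpa using hg)
  have hfacne : ((X : K[X]) + 1) ^ 19 ≠ 0 := pow_ne_zero _ (by
    intro hx
    simpa using congrArg (fun p => Polynomial.coeff p 0) hx)
  have hfacdeg : (((X : K[X]) + 1) ^ 19).degree = 19 := by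
    rw [degree_pow, show ((X : K[X]) + 1).degree = 1 from by simpa using degree_X_add_C (1 : K)]
    rfl
  have hgdeg : g.natDegree ≤ 5 := by
    have hmul : W.Δ.degree = 19 + g.degree := by rw [hg, degree_mul, hfacdeg]
    have : (19 : WithBot ℕ) + (g.natDegree : WithBot ℕ) ≤ 24 := by
      rw [← degree_eq_natDegree hgne, ← hmul]; exact hdegΔ
    have : ((19 + g.natDegree : ℕ) : WithBot ℕ) ≤ ((24 : ℕ) : WithBot ℕ) := by
      push_cast
      exact this
    have := (Nat.cast_le (α := WithBot ℕ)).mp this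
    omega
  have hgc : ∀ m, 5 < m → g.coeff m = 0 := fun m hm =>
    coeff_eq_zero_of_natDegree_lt (lt_of_le_of_lt hgdeg hm)
  have hfac : ((X : K[X]) + 1) ^ 19 = X^19+X^18+X^17+X^16+X^3+X^2+X+1 := by
    linear_combination (9*(X)^18 + 85*(X)^17 + 484*(X)^16 + 1938*(X)^15 + 5814*(X)^14 + 13566*(X)^13 + 25194*(X)^12 + 37791*(X)^11 + 46189*(X)^10 + 46189*(X)^9 + 37791*(X)^8 + 25194*(X)^7 + 13566*(X)^6 + 5814*(X)^5 + 1938*(X)^4 + 484*(X)^3 + 85*(X)^2 + 9*(X)) * h2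
  rw [hfac] at hg
  have hexp : ((X:K[X])^19+X^18+X^17+X^16+X^3+X^2+X+1) * g
      = g*X^19 + g*X^18 + g*X^17 + g*X^16 + g*X^3 + g*X^2 + g*X^1 + g := by ring
  rw [hexp] at hg
  have e24 : (a^4 : K) = (g*X^19 + g*X^18 + g*X^17 + g*X^16 + g*X^3 + g*X^2 + g*X^1 + g).coeff 24 := by
    rw [← hg, hE]
    simp only [coeff_add, ← C_pow, ← C_mul, coeff_C_mul, coeff_mul_X_pow', coeff_X_pow, coeff_C]
    norm_num [ha2c, ha6c]
  simp only [coeff_add, coeff_mul_X_pow'] at e24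
  norm_num [hgc] at e24
  have e23 : (0 : K) = (g*X^19 + g*X^18 + g*X^17 + g*X^16 + g*X^3 + g*X^2 + g*X^1 + g).coeff 23 := by
    rw [← hg, hE]
    simp only [coeff_add, ← C_pow, ← C_mul, coeff_C_mul, coeff_mul_X_pow', coeff_X_pow, coeff_C]
    norm_num [ha2c, ha6c]
  simp only [coeff_add, coeff_mul_X_pow'] at e23
  norm_num [hgc] at e23
  have e22 : (0 : K) = (g*X^19 + g*X^18 + g*X^17 + g*X^16 + g*X^3 + g*X^2 + g*X^1 + g).coeff 22 := by
    rw [← hg, hE]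
    simp only [coeff_add, ← C_pow, ← C_mul, coeff_C_mul, coeff_mul_X_pow', coeff_X_pow, coeff_C]
    norm_num [ha2c, ha6c]
  simp only [coeff_add, coeff_mul_X_pow'] at e22
  norm_num [hgc] at e22
  have e21 : (a^3 : K) = (g*X^19 + g*X^18 + g*X^17 + g*X^16 + g*X^3 + g*X^2 + g*X^1 + g).coeff 21 := by
    rw [← hg, hE]
    simp only [coeff_add, ← C_pow, ← C_mul, coeff_C_mul, coeff_mul_X_pow', coeff_X_pow, coeff_C]
    norm_num [ha2c, ha6c]
  simp only [coeff_add, coeff_mul_X_pow'] at e21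
  norm_num [hgc] at e21
  have e3 : (b^3 : K) = (g*X^19 + g*X^18 + g*X^17 + g*X^16 + g*X^3 + g*X^2 + g*X^1 + g).coeff 3 := by
    rw [← hg, hE]
    simp only [coeff_add, ← C_pow, ← C_mul, coeff_C_mul, coeff_mul_X_pow', coeff_X_pow, coeff_C]
    norm_num [ha2c, ha6c]
  simp only [coeff_add, coeff_mul_X_pow'] at e3
  norm_num [hgc] at e3
  have e2 : (0 : K) = (g*X^19 + g*X^18 + g*X^17 + g*X^16 + g*X^3 + g*X^2 + g*X^1 + g).coeff 2 := by
    rw [← hg, hE]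
    simp only [coeff_add, ← C_pow, ← C_mul, coeff_C_mul, coeff_mul_X_pow', coeff_X_pow, coeff_C]
    norm_num [ha2c, ha6c]
  simp only [coeff_add, coeff_mul_X_pow'] at e2
  norm_num [hgc] at e2
  have e1 : (0 : K) = (g*X^19 + g*X^18 + g*X^17 + g*X^16 + g*X^3 + g*X^2 + g*X^1 + g).coeff 1 := by
    rw [← hg, hE]
    simp only [coeff_add, ← C_pow, ← C_mul, coeff_C_mul, coeff_mul_X_pow', coeff_X_pow, coeff_C]
    norm_num [ha2c, ha6c]
  simp only [coeff_add, coeff_mul_X_pow'] at e1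
  norm_num [hgc] at e1
  have e0 : (b^4 : K) = (g*X^19 + g*X^18 + g*X^17 + g*X^16 + g*X^3 + g*X^2 + g*X^1 + g).coeff 0 := by
    rw [← hg, hE]
    simp only [coeff_add, ← C_pow, ← C_mul, coeff_C_mul, coeff_mul_X_pow', coeff_X_pow, coeff_C]
    norm_num [ha2c, ha6c]
  simp only [coeff_add, coeff_mul_X_pow'] at e0
  norm_num [hgc] at e0
  have hg2 : g.coeff 2 = 0 := by linear_combination e1 - e2
  have hg3 : g.coeff 3 = 0 := by linear_combination e23 - e22
  have ha0 : a = 0 := by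
    have h3 : a ^ 3 = 0 := by linear_combination e21 - e22 + hg2
    exact pow_eq_zero_iff (by norm_num) |>.mp h3
  have hb0 : b = 0 := by
    have h3 : b ^ 3 = 0 := by linear_combination e3 - e2 + hg3
    exact pow_eq_zero_iff (by norm_num) |>.mp h3
  have hg5 : g.coeff 5 = 0 := by rw [← e24, ha0]; norm_num
  have hg4 : g.coeff 4 = 0 := by linear_combination - e23 - hg5
  have hg0 : g.coeff 0 = 0 := by rw [← e0, hb0]; norm_num
  have hg1 : g.coeff 1 = 0 := by linear_combination - e1 - hg0
  have : g = 0 := by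
    ext m
    rcases Nat.lt_or_ge 5 m with hm | hm
    · simpa using hgc m hm
    · interval_cases m <;> simpa [hg0, hg1, hg2, hg3, hg4, hg5]
  exact hgne this
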